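/- Let G be a finite cubic graph on n vertices with a fixed vertex w, and let Ĝ be obtained from G by adding a new vertex u adjacent only to w. Then Ĝ has a trail of length n + 2 if and only if G has a trail of length n + 1 starting at w. -/

import Mathlib

open SimpleGraph

lemma count_congr {α : Type*} [DecidableEq α] [BEq α] [LawfulBEq α] (a : α) (l : List α) :
    @List.count α instBEqOfDecidableEq a l = l.count a := by
  induction l with
  | nil => rfl
  | cons b l ih =>
    simp only [List.count_cons, ih]
    by_cases hb : b = a <;> simp [hb, instBEqOfDecidableEq]

/-- Incidence count identity for walks: the number of edges of a walk containing `v`,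
corrected by endpoint indicators, is twice the number of times `v` occurs in the support. -/
lemma count_aux {V : Type*} [DecidableEq V] {H : SimpleGraph V} {x y : V} (p : H.Walk x y)
    (v : V) :
    (p.edges.filter (fun e => v ∈ e)).length + (if v = x then 1 else 0)
      + (if v = y then 1 else 0) = 2 * p.support.count v := by
  induction p with
  | @nil u =>
    by_cases h : v = u <;>
      simp [h, List.count_cons, List.count_nil] <;> exact fun hh => h hh.symm
  | @cons x c y h q ih =>
    have hne : x ≠ c := h.ne
    simp only [Walk.edges_cons, Walk.support_cons, List.filter_cons, decide_eq_true_eq,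
      Sym2.mem_iff, List.count_cons, beq_iff_eq]
    by_cases hx : v = x <;> by_cases hc : v = c <;> by_cases hy : v = y <;>
      simp only [hx, hc, hy] at ih ⊢ <;>
      simp_all <;> first | omega | exact fun hh => hx hh.symm

lemma filter_length_le_degree {V : Type*} [DecidableEq V] {H : SimpleGraph V}
    [DecidableRel H.Adj] {x y : V} {p : H.Walk x y}
    (hp : p.IsTrail) (v : V) [Fintype (H.neighborSet v)] :
    (p.edges.filter (fun e => v ∈ e)).length ≤ H.degree v := by
  classical
  set l := p.edges.filter (fun e => v ∈ e) with hl
  have hnd : l.Nodup := hp.edges_nodup.filter _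
  have hsub : l.toFinset ⊆ H.incidenceFinset v := by
    intro e he
    rw [List.mem_toFinset, hl, List.mem_filter] at he
    rw [mem_incidenceFinset]
    exact ⟨p.edges_subset_edgeSet he.1, by simpa using he.2⟩
  calc l.length = l.toFinset.card := (List.toFinset_card_of_nodup hnd).symm
    _ ≤ (H.incidenceFinset v).card := Finset.card_le_card hsub
    _ = H.degree v := H.card_incidenceFinset_eq_degree v

lemma sum_count_list {V : Type*} [DecidableEq V] [Fintype V] (l : List V) :
    ∑ v : V, l.count v = l.length := by
  classical
  have h1 : ∑ v ∈ l.toFinset, l.count v = l.length := by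
    simpa using Multiset.toFinset_sum_count_eq (l : Multiset V)
  rw [← h1]
  exact (Finset.sum_subset (Finset.subset_univ _) (by
    intro x _ hx
    simpa [List.count_eq_zero] using fun h => hx (List.mem_toFinset.mpr h))).symm

/-- In a cubic graph, every trail has length at most `n + 1`. -/
lemma trail_length_le {V : Type*} [DecidableEq V] {H : SimpleGraph V} [Fintype V]
    [DecidableRel H.Adj] (hH : ∀ v, H.degree v = 3) {x y : V} {p : H.Walk x y}
    (hp : p.IsTrail) : p.length ≤ Fintype.card V + 1 := by
  have hcount : ∀ v, p.support.count v
      ≤ 1 + ((if v = x then 1 else 0) + (if v = y then 1 else 0)) := by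
    intro v
    have h1 := count_aux p v
    have h2 := filter_length_le_degree hp v
    rw [hH v] at h2
    omega
  have hlen : p.support.length = ∑ v : V, p.support.count v := (sum_count_list _).symm
  have hsum : ∑ v : V, p.support.count v ≤
      ∑ v : V, (1 + ((if v = x then 1 else 0) + (if v = y then 1 else 0))) :=
    Finset.sum_le_sum fun v _ => hcount v
  have h3 : ∑ v : V, (1 + ((if v = x then 1 else 0) + (if v = y then 1 else 0)))
      = Fintype.card V + 2 := by
    simp [Finset.sum_add_distrib, Finset.card_univ]
  have h4 := p.length_support
  omega

/-- The graph `Ĝ` obtained from `G` by adding one new vertex (`none`) adjacent only to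
the vertex `w` of `G`. -/
def addPendant {V : Type*} (G : SimpleGraph V) (w : V) : SimpleGraph (Option V) where
  Adj x y := match x, y with
    | some a, some b => G.Adj a b
    | none, some a => a = w
    | some a, none => a = w
    | none, none => False
  symm := by
    constructor
    rintro (_ | a) (_ | b) h <;> simp_all <;> exact h.symm
  loopless := by
    constructor
    rintro (_ | a) h <;> simp_all

section Pendant

variable {V : Type*} {G : SimpleGraph V} {w : V}

lemma addPendant_adj_none {c : Option V} (h : (addPendant G w).Adj none c) : c = some w := by
  cases c with
  | none => exact absurd h (by simp [addPendant])
  | some c' => have : c' = w := h; rw [this]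

lemma edge_none {e : Sym2 (Option V)} (he : e ∈ (addPendant G w).edgeSet)
    (hn : (none : Option V) ∈ e) : e = s(none, some w) := by
  induction e with
  | _ a b =>
    rw [Sym2.mem_iff] at hn
    rw [mem_edgeSet] at he
    rcases hn with rfl | rfl
    · rw [addPendant_adj_none he]
    · rw [addPendant_adj_none he.symm]
      exact Sym2.eq_swap

/-- Pull back a walk in `addPendant G w` avoiding `none` to a walk in `G`. -/
lemma pull : ∀ {x y : Option V} (p : (addPendant G w).Walk x y), (none ∉ p.support) →
    ∃ (a b : V) (q : G.Walk a b), x = some a ∧ y = some b ∧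
      p.edges = q.edges.map (Sym2.map some) := by
  intro x y p
  induction p with
  | @nil u =>
    intro h
    simp only [Walk.support_nil, List.mem_singleton] at h
    obtain ⟨a, rfl⟩ := Option.ne_none_iff_exists'.mp (Ne.symm h)
    exact ⟨a, a, Walk.nil, rfl, rfl, by simp⟩
  | @cons x c y h q ih =>
    intro hn
    simp only [Walk.support_cons, List.mem_cons] at hn
    push_neg at hn
    obtain ⟨a', b, q', rfl, rfl, hq'⟩ := ih hn.2
    obtain ⟨a, rfl⟩ := Option.ne_none_iff_exists'.mp (Ne.symm hn.1)
    have hadj : G.Adj a a' := h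
    exact ⟨a, b, Walk.cons hadj q', rfl, rfl, by
      simp [Walk.edges_cons, hq', Sym2.map_pair_eq]⟩

/-- In a trail in `addPendant G w`, at most one edge contains `none`. -/
lemma filter_none_le_one [DecidableEq V] {x y : Option V} {t : (addPendant G w).Walk x y}
    (ht : t.IsTrail) :
    (t.edges.filter (fun e => (none : Option V) ∈ e)).length ≤ 1 := by
  classical
  set l := t.edges.filter (fun e => (none : Option V) ∈ e) with hl
  have hnd : l.Nodup := ht.edges_nodup.filter _
  have hall : ∀ e ∈ l, e = s(none, some w) := by
    intro e he
    rw [hl, List.mem_filter] at he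
    exact edge_none (t.edges_subset_edgeSet he.1) (by simpa using he.2)
  have hsub : l.toFinset ⊆ {s(none, some w)} := by
    intro e he
    rw [List.mem_toFinset] at he
    simp [hall e he]
  calc l.length = l.toFinset.card := (List.toFinset_card_of_nodup hnd).symm
    _ ≤ ({s(none, some w)} : Finset (Sym2 (Option V))).card := Finset.card_le_card hsub
    _ = 1 := Finset.card_singleton _

/-- From a trail in `addPendant G w` of length `n + 2` starting at `none`, extract a trail
in `G` of length `n + 1` starting at `w`. -/
lemma from_none [DecidableEq V] [Fintype V] {b : Option V}
    (t : (addPendant G w).Walk none b) (ht : t.IsTrail)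
    (hlen : t.length = Fintype.card V + 2) :
    ∃ (b' : V) (q : G.Walk w b'), q.IsTrail ∧ q.length = Fintype.card V + 1 := by
  cases t with
  | nil => simp at hlen
  | @cons _ c _ h t' =>
    have hc := addPendant_adj_none h
    subst hc
    -- `none` does not occur in `t'`
    have hn : (none : Option V) ∉ t'.support := by
      intro hmem
      have h1 := count_aux (Walk.cons h t') (none : Option V)
      rw [count_congr] at h1
      have h2 := filter_none_le_one (w := w) ht
      have h3 : 1 ≤ t'.support.count (none : Option V) := List.count_pos_iff.mpr hmem
      have h4 : (Walk.cons h t').support.count (none : Option V)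
          = t'.support.count (none : Option V) + 1 := by
        simp [Walk.support_cons, List.count_cons]
      rw [h4, if_pos rfl] at h1
      by_cases hb : (none : Option V) = b <;>
        [rw [if_pos hb] at h1; rw [if_neg hb] at h1] <;> omega
    obtain ⟨a', b', q, ha', rfl, hedges⟩ := pull t' hn
    have haw : a' = w := by injection ha' with h'; exact h'.symm
    subst haw
    have ht' : t'.IsTrail := ht.of_cons
    have hq : q.IsTrail := by
      rw [Walk.isTrail_def]
      exact List.Nodup.of_map _ (hedges ▸ ht'.edges_nodup)
    have hql : q.length = Fintype.card V + 1 := by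
      have h5 : t'.edges.length = q.edges.length := by rw [hedges]; simp
      have h6 : t'.length = Fintype.card V + 1 := by
        simpa [Walk.length_cons] using hlen
      have h7 := t'.length_edges
      have h8 := q.length_edges
      omega
    exact ⟨b', q, hq, hql⟩

end Pendant

/-- Let `G` be a finite cubic graph on `n` vertices with a fixed vertex `w`, and let
`Ĝ` be obtained by adding a new vertex `u` adjacent only to `w`. Then `Ĝ` has a trail
of length `n + 2` iff `G` has a trail of length `n + 1` starting at `w`. -/
theorem stmt_17 {V : Type*} [Fintype V] [DecidableEq V] (G : SimpleGraph V)
    [DecidableRel G.Adj] (hcubic : ∀ v : V, G.degree v = 3) (w : V) :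
    (∃ (a b : Option V) (t : (addPendant G w).Walk a b),
        t.IsTrail ∧ t.length = Fintype.card V + 2) ↔
    (∃ (b : V) (t : G.Walk w b), t.IsTrail ∧ t.length = Fintype.card V + 1) := by
  constructor
  · rintro ⟨a, b, t, ht, hlen⟩
    by_cases hn : (none : Option V) ∈ t.support
    · -- `none` occurs, so it must be an endpoint
      have hend : a = none ∨ b = none := by
        by_contra hcon
        push_neg at hcon
        have h1 := count_aux t (none : Option V)
        rw [count_congr] at h1
        have h2 := filter_none_le_one (w := w) ht
        have h3 : 1 ≤ t.support.count (none : Option V) := List.count_pos_iff.mpr hn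
        rw [if_neg (fun h => hcon.1 h.symm), if_neg (fun h => hcon.2 h.symm)] at h1
        omega
      rcases hend with rfl | rfl
      · exact from_none t ht hlen
      · exact from_none t.reverse ht.reverse (by simpa using hlen)
    · -- `none` avoided: a trail of length `n + 2` inside the cubic graph `G`, impossible
      exfalso
      obtain ⟨a', b', q, rfl, rfl, hedges⟩ := pull t hn
      have hq : q.IsTrail := by
        rw [Walk.isTrail_def]
        exact List.Nodup.of_map _ (hedges ▸ ht.edges_nodup)
      have hql : q.length = Fintype.card V + 2 := by
        have h5 : t.edges.length = q.edges.length := by rw [hedges]; simp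
        have h7 := t.length_edges
        have h8 := q.length_edges
        omega
      have := trail_length_le hcubic hq
      omega
  · rintro ⟨b, q, hq, hlen⟩
    have hinj : Function.Injective (some : V → Option V) := Option.some_injective V
    let f : G →g addPendant G w := ⟨some, fun {a b} h => h⟩
    have hadj : (addPendant G w).Adj none (some w) := rfl
    refine ⟨none, some b, Walk.cons hadj (q.map f), ?_, ?_⟩
    · rw [Walk.isTrail_cons]
      refine ⟨Walk.map_isTrail_of_injective hinj hq, ?_⟩
      intro hmem
      rw [Walk.edges_map, List.mem_map] at hmem
      obtain ⟨e, _, he⟩ := hmem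
      induction e with
      | _ u v => simp [f, Sym2.map_pair_eq, Sym2.eq_iff] at he
    · simp [Walk.length_cons, Walk.length_map, hlen]
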